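/- Let n be odd and m a positive integer, and set a_i = m for all i = 0, ..., n. Then the unique maximizer of d(r) = Σ_{i=1}^n r_i(2m − r_{i−1} − r_i) (with r_0 = r_{n+1} = 0) over the feasible region {r ∈ ℤ_{≥0}^n : r_i + r_{i+1} ≤ m for i = 0,...,n} is the alternating vector r = (m, 0, m, 0, ..., 0, m), for which all Betti numbers β_i = m − r_i − r_{i+1} are zero. -/

import Mathlib

open Finset

/-- Dimension of the variety of equal-dimension chain complexes with ranks `r`. -/
def Dm (n m : ℕ) (r : ℕ → ℕ) : ℤ :=
  ∑ i ∈ Icc 1 n, (r i : ℤ) * (2 * (m : ℤ) - r (i - 1) - r i)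

/-- Feasibility of the rank vector `r` (with conventions `r 0 = r (n+1) = 0`). -/
def feasm (n m : ℕ) (r : ℕ → ℕ) : Prop :=
  r 0 = 0 ∧ r (n + 1) = 0 ∧ ∀ i ≤ n, r i + r (i + 1) ≤ m

lemma key_id (m : ℕ) (r : ℕ → ℕ) (n : ℕ) :
    ∑ i ∈ range (n+1), ((m:ℤ) - r i - r (i+1))^2
      = (n+1 : ℤ) * m^2 - 2 * Dm n m r - 2*m*(r 0 : ℤ) - 2*m*(r (n+1) : ℤ)
        + (r 0 : ℤ)^2 + (r (n+1) : ℤ)^2 + 2*(r n : ℤ)*(r (n+1) : ℤ) := by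
  induction n with
  | zero =>
    simp only [Dm, zero_add, range_one, sum_singleton, Nat.cast_one]
    rw [show Icc 1 0 = (∅ : Finset ℕ) by rfl]
    simp
    ring
  | succ k ih =>
    rw [Finset.sum_range_succ, ih]
    have hD : Dm (k+1) m r = Dm k m r + (r (k+1) : ℤ) * (2*(m:ℤ) - r k - r (k+1)) := by
      unfold Dm
      rw [Finset.sum_Icc_succ_top (by omega)]
      simp
    rw [hD]
    push_cast
    ring

lemma key_id' (n m : ℕ) (r : ℕ → ℕ) (h0 : r 0 = 0) (h1 : r (n+1) = 0) :
    2 * Dm n m r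
      = (n+1 : ℤ) * m^2 - ∑ i ∈ range (n+1), ((m:ℤ) - r i - r (i+1))^2 := by
  have := key_id m r n
  rw [h0, h1] at this
  push_cast at this
  linarith

/-- For `n` odd and `m > 0`, the unique maximizer of `Dm` over the feasible region is
the alternating vector `(m, 0, m, 0, ..., 0, m)`, for which all Betti numbers
`β_i = m - r_i - r_{i+1}` vanish. -/
theorem stmt12 (n m : ℕ) (hn : Odd n) (hm : 0 < m) :
    feasm n m (fun i => if i % 2 = 1 then m else 0) ∧
    (∀ r : ℕ → ℕ, feasm n m r →
      Dm n m r ≤ Dm n m (fun i => if i % 2 = 1 then m else 0)) ∧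
    (∀ r : ℕ → ℕ, feasm n m r →
      (∀ s : ℕ → ℕ, feasm n m s → Dm n m s ≤ Dm n m r) →
      ∀ i ≤ n, r i = if i % 2 = 1 then m else 0) ∧
    (∀ i ≤ n, (m : ℤ) - (if i % 2 = 1 then (m : ℕ) else 0) -
        (if (i + 1) % 2 = 1 then (m : ℕ) else 0) = 0) := by
  have hn2 : n % 2 = 1 := Nat.odd_iff.mp hn
  have hbeta : ∀ i : ℕ, (m : ℤ) - ((if i % 2 = 1 then (m:ℕ) else 0) : ℤ)
      - ((if (i+1) % 2 = 1 then (m:ℕ) else 0) : ℤ) = 0 := by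
    intro i
    split_ifs with h1 h2 h3 <;> push_cast <;> omega
  have hfeas : feasm n m (fun i => if i % 2 = 1 then m else 0) := by
    refine ⟨by norm_num, ?_, ?_⟩
    · have h : ¬ ((n+1) % 2 = 1) := by omega
      simp [h]
    · intro i _
      simp only
      split_ifs with h1 h2 h3 <;> omega
  have halt : 2 * Dm n m (fun i => if i % 2 = 1 then m else 0) = (n+1 : ℤ) * m^2 := by
    rw [key_id' n m (fun i => if i % 2 = 1 then m else 0) hfeas.1 hfeas.2.1]
    rw [Finset.sum_eq_zero (fun i _ => by
      split_ifs with h1 h2 h3 <;> first | (exfalso; omega) | (push_cast; ring))]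
    ring
  have hub : ∀ r : ℕ → ℕ, feasm n m r →
      Dm n m r ≤ Dm n m (fun i => if i % 2 = 1 then m else 0) := by
    intro r hr
    have h2 := key_id' n m r hr.1 hr.2.1
    have hnn : (0:ℤ) ≤ ∑ i ∈ range (n+1), ((m:ℤ) - r i - r (i+1))^2 :=
      Finset.sum_nonneg (fun i _ => sq_nonneg _)
    linarith
  refine ⟨hfeas, hub, ?_, fun i _ => by
    split_ifs with h1 h2 h3 <;> first | (exfalso; omega) | (push_cast; ring)⟩
  intro r hr hmax
  have heq : Dm n m r = Dm n m (fun i => if i % 2 = 1 then m else 0) :=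
    le_antisymm (hub r hr) (hmax _ hfeas)
  have h2 := key_id' n m r hr.1 hr.2.1
  have hsum0 : ∑ i ∈ range (n+1), ((m:ℤ) - r i - r (i+1))^2 = 0 := by
    rw [heq] at h2
    linarith [halt]
  have hz : ∀ i ≤ n, r i + r (i+1) = m := by
    intro i hi
    have hmem : i ∈ range (n+1) := Finset.mem_range.mpr (by omega)
    have := (Finset.sum_eq_zero_iff_of_nonneg (fun j _ => sq_nonneg
      ((m:ℤ) - r j - r (j+1)))).mp hsum0 i hmem
    have h3 : (m:ℤ) - r i - r (i+1) = 0 := by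
      have := sq_eq_zero_iff.mp this
      exact this
    omega
  intro i hi
  induction i with
  | zero => simpa using hr.1
  | succ k ih =>
    have hk : k ≤ n := by omega
    have e1 := hz k hk
    have e2 := ih hk
    split_ifs at e2 ⊢ with h1 h2 h2 <;> omega
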